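/- Hessian formula for J: for V ∈ S and any direction Z ∈ ℝ^{(m+n)×n}, the second directional derivative of J at V along Z, i.e. (d²/dτ²)J(V + τZ)|_{τ=0}, equals 4·Tr(ZᵀX̄₁ᵀP'[Z]X̄₁VΣ_V) + 2·Tr(Zᵀ(Ū₀ᵀRŪ₀ + X̄₁ᵀP_VX̄₁)ZΣ_V), where E_V := (Ū₀ᵀRŪ₀ + X̄₁ᵀP_VX̄₁)V and P'[Z] := Σ_{i≥0}(VᵀX̄₁ᵀ)ⁱ(ZᵀE_V + E_VᵀZ)(X̄₁V)ⁱ. -/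

import Mathlib

open Matrix

noncomputable section

/-- Euclidean norm of a vector. -/
def eNorm {ι : Type*} [Fintype ι] (v : ι → ℝ) : ℝ :=
  Real.sqrt (∑ i, v i ^ 2)

/-- Frobenius norm of a matrix. -/
def frobNorm {ι κ : Type*} [Fintype ι] [Fintype κ] (A : Matrix ι κ ℝ) : ℝ :=
  Real.sqrt (∑ i, ∑ j, A i j ^ 2)

/-- Spectral (operator 2-) norm of a matrix. -/
def spNorm {ι κ : Type*} [Fintype ι] [Fintype κ] (A : Matrix ι κ ℝ) : ℝ :=
  sSup {r : ℝ | ∃ v : κ → ℝ, eNorm v = 1 ∧ r = eNorm (A.mulVec v)}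

/-- Smallest singular value of a matrix `A`, i.e. the square root of the smallest
eigenvalue of `A * Aᵀ`, expressed as `inf_{‖u‖ = 1} ‖Aᵀ u‖`. -/
def sigMin {ι κ : Type*} [Fintype ι] [Fintype κ] (A : Matrix ι κ ℝ) : ℝ :=
  sInf {r : ℝ | ∃ u : ι → ℝ, eNorm u = 1 ∧ r = eNorm (A.vecMul u)}

/-- `ρ(A) < 1` : the spectral radius of the real square matrix `A` (i.e. the
largest modulus of a complex eigenvalue) is smaller than one. -/
def specLt1 {ι : Type*} [Fintype ι] [DecidableEq ι] (A : Matrix ι ι ℝ) : Prop :=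
  spectralRadius ℂ (A.map Complex.ofReal) < 1

/-- Right inverse `M† = Mᵀ (M Mᵀ)⁻¹` of a full-row-rank matrix. -/
def pinv {ι κ : Type*} [Fintype ι] [Fintype κ] [DecidableEq ι] (A : Matrix ι κ ℝ) :
    Matrix κ ι ℝ :=
  Aᵀ * (A * Aᵀ)⁻¹

/-- Orthogonal projection `Π_A = I - A† A` onto the nullspace of `A`. -/
def projNull {ι κ : Type*} [Fintype ι] [Fintype κ] [DecidableEq ι] [DecidableEq κ]
    (A : Matrix ι κ ℝ) : Matrix κ κ ℝ :=
  1 - pinv A * A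

/-- `Σ(M) = ∑_{i≥0} Mⁱ (Mᵀ)ⁱ`, the unique solution of the discrete Lyapunov
equation `Σ = I + M Σ Mᵀ` when `ρ(M) < 1`. -/
def lyap {k : ℕ} (M : Matrix (Fin k) (Fin k) ℝ) : Matrix (Fin k) (Fin k) ℝ :=
  ∑' i : ℕ, M ^ i * (Mᵀ) ^ i

variable {n m t : ℕ}

/-- Stacked data matrix `D₀ = [U₀; X₀]`. -/
def Dmat (U0 : Matrix (Fin m) (Fin t) ℝ) (X0 : Matrix (Fin n) (Fin t) ℝ) :
    Matrix (Fin m ⊕ Fin n) (Fin t) ℝ :=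
  Matrix.fromRows U0 X0

/-- `Ū₀ = (1/t) U₀ D₀ᵀ`. -/
def Ubar (U0 : Matrix (Fin m) (Fin t) ℝ) (X0 : Matrix (Fin n) (Fin t) ℝ) :
    Matrix (Fin m) (Fin m ⊕ Fin n) ℝ :=
  (t : ℝ)⁻¹ • (U0 * (Dmat U0 X0)ᵀ)

/-- `X̄₀ = (1/t) X₀ D₀ᵀ`. -/
def Xbar0 (U0 : Matrix (Fin m) (Fin t) ℝ) (X0 : Matrix (Fin n) (Fin t) ℝ) :
    Matrix (Fin n) (Fin m ⊕ Fin n) ℝ :=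
  (t : ℝ)⁻¹ • (X0 * (Dmat U0 X0)ᵀ)

/-- `X̄₁ = (1/t) X₁ D₀ᵀ`. -/
def Xbar1 (U0 : Matrix (Fin m) (Fin t) ℝ) (X0 X1 : Matrix (Fin n) (Fin t) ℝ) :
    Matrix (Fin n) (Fin m ⊕ Fin n) ℝ :=
  (t : ℝ)⁻¹ • (X1 * (Dmat U0 X0)ᵀ)

/-- Sample covariance `Φ = (1/t) D₀ D₀ᵀ`. -/
def Phi (U0 : Matrix (Fin m) (Fin t) ℝ) (X0 : Matrix (Fin n) (Fin t) ℝ) :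
    Matrix (Fin m ⊕ Fin n) (Fin m ⊕ Fin n) ℝ :=
  (t : ℝ)⁻¹ • (Dmat U0 X0 * (Dmat U0 X0)ᵀ)

/-- The feasible set `S = {V : X̄₀ V = I, ρ(X̄₁ V) < 1}`. -/
def feasSet (U0 : Matrix (Fin m) (Fin t) ℝ) (X0 X1 : Matrix (Fin n) (Fin t) ℝ) :
    Set (Matrix (Fin m ⊕ Fin n) (Fin n) ℝ) :=
  {V | Xbar0 U0 X0 * V = 1 ∧ specLt1 (Xbar1 U0 X0 X1 * V)}

/-- The closed-loop Lyapunov solution `Σ_V`, i.e. the unique solution of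
`Σ_V = I + (X̄₁ V) Σ_V (X̄₁ V)ᵀ` when `V ∈ S`. -/
def SigV (U0 : Matrix (Fin m) (Fin t) ℝ) (X0 X1 : Matrix (Fin n) (Fin t) ℝ)
    (V : Matrix (Fin m ⊕ Fin n) (Fin n) ℝ) : Matrix (Fin n) (Fin n) ℝ :=
  lyap (Xbar1 U0 X0 X1 * V)

/-- `P_V`, the unique solution of `P = Q + Vᵀ Ū₀ᵀ R Ū₀ V + (X̄₁V)ᵀ P (X̄₁V)`
when `V ∈ S`, given by its convergent series. -/
def PV (U0 : Matrix (Fin m) (Fin t) ℝ) (X0 X1 : Matrix (Fin n) (Fin t) ℝ)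
    (Q : Matrix (Fin n) (Fin n) ℝ) (R : Matrix (Fin m) (Fin m) ℝ)
    (V : Matrix (Fin m ⊕ Fin n) (Fin n) ℝ) : Matrix (Fin n) (Fin n) ℝ :=
  ∑' i : ℕ, ((Xbar1 U0 X0 X1 * V)ᵀ) ^ i *
      (Q + Vᵀ * (Ubar U0 X0)ᵀ * R * Ubar U0 X0 * V) * (Xbar1 U0 X0 X1 * V) ^ i

/-- The covariance-parameterized LQR cost `J(V)`. -/
def Jcost (U0 : Matrix (Fin m) (Fin t) ℝ) (X0 X1 : Matrix (Fin n) (Fin t) ℝ)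
    (Q : Matrix (Fin n) (Fin n) ℝ) (R : Matrix (Fin m) (Fin m) ℝ)
    (V : Matrix (Fin m ⊕ Fin n) (Fin n) ℝ) : ℝ :=
  Matrix.trace ((Q + Vᵀ * (Ubar U0 X0)ᵀ * R * Ubar U0 X0 * V) * SigV U0 X0 X1 V)

/-- `J* = inf_{V ∈ S} J(V)`. -/
def Jstar (U0 : Matrix (Fin m) (Fin t) ℝ) (X0 X1 : Matrix (Fin n) (Fin t) ℝ)
    (Q : Matrix (Fin n) (Fin n) ℝ) (R : Matrix (Fin m) (Fin m) ℝ) : ℝ :=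
  sInf (Jcost U0 X0 X1 Q R '' feasSet U0 X0 X1)

/-- Sublevel set `S(a) = {V ∈ S : J(V) ≤ a}`. -/
def subLevel (U0 : Matrix (Fin m) (Fin t) ℝ) (X0 X1 : Matrix (Fin n) (Fin t) ℝ)
    (Q : Matrix (Fin n) (Fin n) ℝ) (R : Matrix (Fin m) (Fin m) ℝ) (a : ℝ) :
    Set (Matrix (Fin m ⊕ Fin n) (Fin n) ℝ) :=
  {V | V ∈ feasSet U0 X0 X1 ∧ Jcost U0 X0 X1 Q R V ≤ a}

/-- The gradient `∇J(V) = 2 (Ū₀ᵀ R Ū₀ + X̄₁ᵀ P_V X̄₁) V Σ_V`. -/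
def gradJ (U0 : Matrix (Fin m) (Fin t) ℝ) (X0 X1 : Matrix (Fin n) (Fin t) ℝ)
    (Q : Matrix (Fin n) (Fin n) ℝ) (R : Matrix (Fin m) (Fin m) ℝ)
    (V : Matrix (Fin m ⊕ Fin n) (Fin n) ℝ) : Matrix (Fin m ⊕ Fin n) (Fin n) ℝ :=
  (2 : ℝ) • (((Ubar U0 X0)ᵀ * R * Ubar U0 X0 +
      (Xbar1 U0 X0 X1)ᵀ * PV U0 X0 X1 Q R V * Xbar1 U0 X0 X1) * V * SigV U0 X0 X1 V)

/-- `ξ(a) = ‖Ū₀‖² ‖R‖ + ‖X̄₁‖² a`. -/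
def xiC (U0 : Matrix (Fin m) (Fin t) ℝ) (X0 X1 : Matrix (Fin n) (Fin t) ℝ)
    (R : Matrix (Fin m) (Fin m) ℝ) (a : ℝ) : ℝ :=
  spNorm (Ubar U0 X0) ^ 2 * spNorm R + spNorm (Xbar1 U0 X0 X1) ^ 2 * a

/-- Smoothness constant `l(a)`. -/
def lC (U0 : Matrix (Fin m) (Fin t) ℝ) (X0 X1 : Matrix (Fin n) (Fin t) ℝ)
    (Q : Matrix (Fin n) (Fin n) ℝ) (R : Matrix (Fin m) (Fin m) ℝ) (a : ℝ) : ℝ :=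
  4 * a ^ 2 * (xiC U0 X0 X1 R a + a - sigMin Q) * frobNorm (Xbar1 U0 X0 X1) ^ 2 / sigMin Q ^ 2 +
    2 * xiC U0 X0 X1 R a * a / sigMin Q

/-- Gradient-dominance constant `μ(a) = 4a²/(σ̲(Q)^{3/2} σ̲(R)^{1/2} σ̲(Ū₀))`. -/
def muC (U0 : Matrix (Fin m) (Fin t) ℝ) (X0 : Matrix (Fin n) (Fin t) ℝ)
    (Q : Matrix (Fin n) (Fin n) ℝ) (R : Matrix (Fin m) (Fin m) ℝ) (a : ℝ) : ℝ :=
  4 * a ^ 2 / (Real.sqrt (sigMin Q) ^ 3 * Real.sqrt (sigMin R) * sigMin (Ubar U0 X0))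

/-- Reparameterized cost `f(L, Σ) = Tr(QΣ) + Tr(L Σ⁻¹ Lᵀ Ū₀ᵀ R Ū₀)`. -/
def fRep (U0 : Matrix (Fin m) (Fin t) ℝ) (X0 : Matrix (Fin n) (Fin t) ℝ)
    (Q : Matrix (Fin n) (Fin n) ℝ) (R : Matrix (Fin m) (Fin m) ℝ)
    (L : Matrix (Fin m ⊕ Fin n) (Fin n) ℝ) (Sg : Matrix (Fin n) (Fin n) ℝ) : ℝ :=
  Matrix.trace (Q * Sg) + Matrix.trace (L * Sg⁻¹ * Lᵀ * (Ubar U0 X0)ᵀ * R * Ubar U0 X0)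

/-- Feasible set `ℒ` of the convex reparameterization. -/
def repSet (U0 : Matrix (Fin m) (Fin t) ℝ) (X0 X1 : Matrix (Fin n) (Fin t) ℝ) :
    Set (Matrix (Fin m ⊕ Fin n) (Fin n) ℝ × Matrix (Fin n) (Fin n) ℝ) :=
  {p | p.2.IsSymm ∧ p.2 = Xbar0 U0 X0 * p.1 ∧
    (Matrix.fromBlocks (p.2 - 1) (Xbar1 U0 X0 X1 * p.1)
      ((Xbar1 U0 X0 X1 * p.1)ᵀ) p.2).PosSemidef}

/-- `p(a) = (16a³/(σ̲(Q)²ζ)) (1 + a/σ̲(Q)) (1 + √(a/σ̲(R)))`. -/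
def pC (Q : Matrix (Fin n) (Fin n) ℝ) (R : Matrix (Fin m) (Fin m) ℝ) (ζ a : ℝ) : ℝ :=
  16 * a ^ 3 / (sigMin Q ^ 2 * ζ) * (1 + a / sigMin Q) * (1 + Real.sqrt (a / sigMin R))

section HessianAux

open Filter Topology
open scoped ENNReal NNReal

namespace HessAux

attribute [local instance] Matrix.frobeniusSeminormedAddCommGroup
  Matrix.frobeniusNormedAddCommGroup Matrix.frobeniusNormedSpace
  Matrix.frobeniusNormedRing Matrix.frobeniusNormedAlgebra

/-- The Frobenius topology on real matrices, to be preferred locally. -/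
@[reducible] def frobTop {ι κ : Type*} [Fintype ι] [Fintype κ] :
    TopologicalSpace (Matrix ι κ ℝ) :=
  PseudoMetricSpace.toUniformSpace.toTopologicalSpace

attribute [local instance high] frobTop

variable {n : ℕ}

/-- Geometric decay of powers of a matrix (Frobenius norm). -/
def Decay (A : Matrix (Fin n) (Fin n) ℝ) : Prop :=
  ∃ C r : ℝ, 0 ≤ C ∧ 0 ≤ r ∧ r < 1 ∧ ∀ k, ‖A ^ k‖ ≤ C * r ^ k

lemma decay_of_bound {A : Matrix (Fin n) (Fin n) ℝ} {s : ℝ} (hs0 : 0 < s) (hs1 : s < 1)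
    {N : ℕ} (h : ∀ k ≥ N, ‖A ^ k‖ ≤ s ^ k) : Decay A := by
  set C : ℝ := (∑ j ∈ Finset.range N, ‖A ^ j‖ / s ^ j) + 1 with hC
  have hCsum : ∀ j ∈ Finset.range N, (0:ℝ) ≤ ‖A ^ j‖ / s ^ j := fun j _ => by positivity
  have hC1 : (1:ℝ) ≤ C := by
    have := Finset.sum_nonneg hCsum; simp only [hC]; linarith
  refine ⟨C, s, by linarith, hs0.le, hs1, ?_⟩
  intro k
  rcases lt_or_ge k N with hk | hk
  · have h1 : ‖A ^ k‖ / s ^ k ≤ C := by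
      have := Finset.single_le_sum (f := fun j => ‖A ^ j‖ / s ^ j) hCsum
        (Finset.mem_range.mpr hk)
      simp only [hC]; linarith
    have hsk : (0:ℝ) < s ^ k := pow_pos hs0 k
    calc ‖A ^ k‖ = ‖A ^ k‖ / s ^ k * s ^ k := by field_simp
    _ ≤ C * s ^ k := by gcongr
  · calc ‖A ^ k‖ ≤ s ^ k := h k hk
    _ = 1 * s ^ k := (one_mul _).symm
    _ ≤ C * s ^ k := mul_le_mul_of_nonneg_right hC1 (pow_pos hs0 k).le

lemma decay_of_specLt1 {A : Matrix (Fin n) (Fin n) ℝ} (hA : specLt1 A) : Decay A := by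
  have hnorm : ∀ k : ℕ, ‖(A.map Complex.ofReal) ^ k‖₊ = ‖A ^ k‖₊ := by
    intro k
    have : (A.map Complex.ofReal) ^ k = (A ^ k).map Complex.ofReal := by
      exact (Complex.ofRealHom.mapMatrix.map_pow A k).symm
    rw [this]
    exact Matrix.frobenius_nnnorm_map_eq _ _ (fun a => by simp)
  have hgel := spectrum.pow_nnnorm_pow_one_div_tendsto_nhds_spectralRadius
    (A.map Complex.ofReal)
  unfold specLt1 at hA
  obtain ⟨c, hc1, hc2⟩ := exists_between hA
  have hctop : c ≠ ⊤ := (hc2.trans_le le_top).ne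
  have hev : ∀ᶠ k : ℕ in atTop, (‖(A.map Complex.ofReal) ^ k‖₊ : ℝ≥0∞) ^ (1 / (k : ℝ)) < c :=
    hgel.eventually_lt_const hc1
  obtain ⟨N, hN⟩ := (hev.and (eventually_ge_atTop 1)).exists_forall_of_atTop
  set s : ℝ := max c.toReal (1/2) with hs
  have hs0 : (0:ℝ) < s := lt_max_of_lt_right (by norm_num)
  have hs1 : s < 1 := by
    have : c.toReal < 1 := by
      have := ENNReal.toReal_lt_toReal hctop (by norm_num : (1:ℝ≥0∞) ≠ ⊤) |>.mpr hc2
      simpa using this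
    simp only [hs, max_lt_iff]; exact ⟨this, by norm_num⟩
  apply decay_of_bound hs0 hs1 (N := N)
  intro k hk
  obtain ⟨h1, h2⟩ := hN k hk
  have hk0 : (k : ℝ) ≠ 0 := Nat.cast_ne_zero.mpr (by omega)
  have hx : (‖A ^ k‖₊ : ℝ≥0∞) ≤ c ^ k := by
    have h3 := ENNReal.rpow_le_rpow h1.le (by positivity : (0:ℝ) ≤ (k:ℝ))
    rw [← ENNReal.rpow_mul, one_div, inv_mul_cancel₀ hk0, ENNReal.rpow_one,
      ENNReal.rpow_natCast, hnorm] at h3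
    exact h3
  have h4 : ‖A ^ k‖ ≤ c.toReal ^ k := by
    have := ENNReal.toReal_mono (ENNReal.pow_ne_top hctop) hx
    rw [ENNReal.toReal_pow] at this
    simpa using this
  calc ‖A ^ k‖ ≤ c.toReal ^ k := h4
  _ ≤ s ^ k := pow_le_pow_left₀ ENNReal.toReal_nonneg (le_max_left _ _) k

lemma decay_of_pow_small {M : Matrix (Fin n) (Fin n) ℝ} {k₀ : ℕ} (hk₀ : 1 ≤ k₀)
    (h : ‖M ^ k₀‖ ≤ 1/2) : Decay M := by
  set r : ℝ := (2:ℝ)⁻¹ ^ ((k₀:ℝ)⁻¹) with hr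
  have hk₀R : (0:ℝ) < (k₀:ℝ) := by positivity
  have hr0 : 0 < r := Real.rpow_pos_of_pos (by norm_num) _
  have hr1 : r < 1 := Real.rpow_lt_one (by norm_num) (by norm_num) (by positivity)
  have hrpow : ∀ m : ℕ, r ^ m = (2:ℝ)⁻¹ ^ ((m:ℝ) * (k₀:ℝ)⁻¹) := by
    intro m
    rw [hr, ← Real.rpow_natCast (_ ^ _) m, ← Real.rpow_mul (by norm_num), mul_comm]
  have hrk₀ : r ^ k₀ = 2⁻¹ := by
    rw [hrpow k₀, mul_inv_cancel₀ (ne_of_gt hk₀R), Real.rpow_one]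
  set S : ℝ := (∑ j ∈ Finset.range k₀, ‖M ^ j‖) + 1 with hS
  have hS1 : 1 ≤ S := by
    have : (0:ℝ) ≤ ∑ j ∈ Finset.range k₀, ‖M ^ j‖ :=
      Finset.sum_nonneg fun j _ => norm_nonneg _
    simp only [hS]; linarith
  have hSnn : 0 < S := by linarith
  refine ⟨2 * S, r, by linarith, hr0.le, hr1, ?_⟩
  intro k
  rcases lt_or_ge k k₀ with hk | hk
  · have hSj : ‖M ^ k‖ ≤ S := by
      have := Finset.single_le_sum (f := fun j => ‖M ^ j‖) (fun j _ => norm_nonneg _)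
        (Finset.mem_range.mpr hk)
      simp only [hS]; linarith
    have hrk : (2:ℝ)⁻¹ ≤ r ^ k := by
      rw [← hrk₀]
      exact pow_le_pow_of_le_one hr0.le hr1.le hk.le
    nlinarith
  · obtain ⟨q, j, hjlt, hkeq⟩ : ∃ q j, j < k₀ ∧ k = k₀ * q + j :=
      ⟨k / k₀, k % k₀, Nat.mod_lt _ (by omega), (Nat.div_add_mod k k₀).symm⟩
    have hq1 : 1 ≤ q := by
      rcases Nat.eq_zero_or_pos q with h0 | h
      · subst h0; simp at hkeq; omega
      · exact h
    have hSj : ‖M ^ j‖ ≤ S := by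
      have := Finset.single_le_sum (f := fun j => ‖M ^ j‖) (fun j _ => norm_nonneg _)
        (Finset.mem_range.mpr hjlt)
      simp only [hS]; linarith
    have hdecomp : M ^ k = (M ^ k₀) ^ q * M ^ j := by
      rw [hkeq, pow_add, pow_mul]
    have hnq : ‖(M ^ k₀) ^ q‖ ≤ (2⁻¹ : ℝ) ^ q := by
      calc ‖(M ^ k₀) ^ q‖ ≤ ‖M ^ k₀‖ ^ q := norm_pow_le' _ (by omega)
      _ ≤ (2⁻¹ : ℝ) ^ q := by apply pow_le_pow_left₀ (norm_nonneg _); linarith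
    have hrk : (2⁻¹:ℝ) ^ q ≤ 2 * r ^ k := by
      have hkq : (k:ℝ) * (k₀:ℝ)⁻¹ ≤ (q:ℝ) + 1 := by
        have hc : (k:ℝ) ≤ ((q:ℝ)+1) * (k₀:ℝ) := by
          have : k ≤ (q+1) * k₀ := by
            calc k = k₀ * q + j := hkeq
            _ ≤ k₀ * q + k₀ := by omega
            _ = (q+1) * k₀ := by ring
          exact_mod_cast this
        rw [← div_eq_mul_inv, div_le_iff₀ hk₀R]
        exact hc
      have h1 : (2:ℝ)⁻¹ ^ ((q:ℝ)+1) ≤ (2:ℝ)⁻¹ ^ ((k:ℝ) * (k₀:ℝ)⁻¹) :=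
        Real.rpow_le_rpow_of_exponent_ge (by norm_num) (by norm_num) hkq
      have h2 : (2:ℝ)⁻¹ ^ ((q:ℝ)+1) = (2⁻¹:ℝ) ^ q * 2⁻¹ := by
        rw [show ((q:ℝ)+1) = ((q+1 : ℕ):ℝ) by push_cast; ring, Real.rpow_natCast, pow_succ]
      rw [h2] at h1
      rw [hrpow k]
      linarith
    calc ‖M ^ k‖ ≤ ‖(M ^ k₀) ^ q‖ * ‖M ^ j‖ := by rw [hdecomp]; exact norm_mul_le _ _
    _ ≤ (2⁻¹:ℝ) ^ q * S := mul_le_mul hnq hSj (norm_nonneg _) (by positivity)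
    _ ≤ (2 * r ^ k) * S := mul_le_mul_of_nonneg_right hrk hSnn.le
    _ = 2 * S * r ^ k := by ring

lemma decay_nhds {A B : Matrix (Fin n) (Fin n) ℝ} (hA : Decay A) :
    ∀ᶠ τ : ℝ in 𝓝 0, Decay (A + τ • B) := by
  obtain ⟨C, r, hC, hr0, hr1, hbd⟩ := hA
  have hto : Tendsto (fun k : ℕ => C * r ^ k) atTop (𝓝 0) := by
    simpa using (tendsto_pow_atTop_nhds_zero_of_lt_one hr0 hr1).const_mul C
  obtain ⟨k₀, hk₀⟩ := ((hto.eventually_lt_const (by norm_num : (0:ℝ) < 1/3)).and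
    (eventually_ge_atTop 1)).exists
  have hA3 : ‖A ^ k₀‖ < 1/3 := lt_of_le_of_lt (hbd k₀) hk₀.1
  have hcont : Continuous fun τ : ℝ => ‖(A + τ • B) ^ k₀‖ := by
    apply Continuous.norm
    apply Continuous.pow
    exact continuous_const.add (continuous_id.smul continuous_const)
  have h0 : ‖(A + (0:ℝ) • B) ^ k₀‖ < 1/2 := by
    simpa using hA3.trans_le (by norm_num)
  have hev : ∀ᶠ τ : ℝ in 𝓝 0, ‖(A + τ • B) ^ k₀‖ < 1/2 :=
    (hcont.continuousAt (x := 0)).eventually_lt_const h0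
  exact hev.mono fun τ hτ => decay_of_pow_small hk₀.2 hτ.le

/-- The continuous linear map `X ↦ P * X * Q`. -/
def conjCLM (P Q : Matrix (Fin n) (Fin n) ℝ) :
    Matrix (Fin n) (Fin n) ℝ →L[ℝ] Matrix (Fin n) (Fin n) ℝ :=
  ((LinearMap.mulRight ℝ Q).comp (LinearMap.mulLeft ℝ P)).toContinuousLinearMap

@[simp] lemma conjCLM_apply (P Q X : Matrix (Fin n) (Fin n) ℝ) :
    conjCLM P Q X = P * X * Q := rfl

lemma conjCLM_norm_le (P Q : Matrix (Fin n) (Fin n) ℝ) :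
    ‖conjCLM P Q‖ ≤ ‖P‖ * ‖Q‖ := by
  apply ContinuousLinearMap.opNorm_le_bound _ (mul_nonneg (norm_nonneg _) (norm_nonneg _))
  intro X
  calc ‖conjCLM P Q X‖ = ‖P * X * Q‖ := rfl
  _ ≤ ‖P * X‖ * ‖Q‖ := norm_mul_le _ _
  _ ≤ ‖P‖ * ‖X‖ * ‖Q‖ := by gcongr; exact norm_mul_le _ _
  _ = ‖P‖ * ‖Q‖ * ‖X‖ := by ring

lemma conjCLM_pow (A : Matrix (Fin n) (Fin n) ℝ) (i : ℕ) :
    (conjCLM Aᵀ A) ^ i = conjCLM ((Aᵀ) ^ i) (A ^ i) := by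
  induction i with
  | zero => ext X; simp
  | succ i ih =>
      refine ContinuousLinearMap.ext fun X => ?_
      rw [pow_succ]
      simp only [ContinuousLinearMap.mul_apply, ih, conjCLM_apply]
      rw [pow_succ Aᵀ, pow_succ' A]
      simp only [Matrix.mul_assoc]

/-- Neumann series inverse from summability of powers. -/
lemma inverse_one_sub_of_summable {R : Type*} [NormedRing R] [CompleteSpace R]
    {x : R} (h : Summable (fun i => x ^ i)) :
    IsUnit (1 - x) ∧ Ring.inverse (1 - x) = ∑' i, x ^ i := by
  have h1 : ∑' i, x ^ (i + 1) = (∑' i, x ^ i) - 1 := by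
    have := Summable.tsum_eq_zero_add h
    rw [pow_zero] at this
    rw [this]; abel
  have hmulL : x * ∑' i, x ^ i = ∑' i, x ^ (i + 1) := by
    rw [← h.tsum_mul_left x]
    exact tsum_congr fun i => by rw [pow_succ']
  have hmulR : (∑' i, x ^ i) * x = ∑' i, x ^ (i + 1) := by
    rw [← h.tsum_mul_right x]
    exact tsum_congr fun i => by rw [pow_succ]
  have hL : (1 - x) * ∑' i, x ^ i = 1 := by
    rw [sub_mul, one_mul, hmulL, h1]; abel
  have hR : (∑' i, x ^ i) * (1 - x) = 1 := by
    rw [mul_sub, mul_one, hmulR, h1]; abel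
  refine ⟨⟨⟨1 - x, ∑' i, x ^ i, hL, hR⟩, rfl⟩, ?_⟩
  exact Ring.inverse_unit ⟨1 - x, ∑' i, x ^ i, hL, hR⟩

variable {M : Matrix (Fin n) (Fin n) ℝ}

lemma decay_sq (hM : Decay M) : ∃ C r : ℝ, 0 ≤ C ∧ 0 ≤ r ∧ r < 1 ∧
    ∀ k, ‖M ^ k‖ * ‖M ^ k‖ ≤ C * r ^ k := by
  obtain ⟨C, r, hC, hr0, hr1, h⟩ := hM
  exact ⟨C * C, r * r, by positivity, by positivity, by nlinarith, fun k => by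
    have := h k
    have h2 : (r*r) ^ k = r ^ k * r ^ k := by rw [mul_pow]
    nlinarith [norm_nonneg (M ^ k), pow_nonneg hr0 k]⟩

lemma summable_conj_pow (hM : Decay M) : Summable fun i => (conjCLM Mᵀ M) ^ i := by
  obtain ⟨C, r, hC, hr0, hr1, h⟩ := decay_sq hM
  apply Summable.of_norm_bounded ((summable_geometric_of_lt_one hr0 hr1).mul_left C)
  intro i
  rw [conjCLM_pow]
  calc ‖conjCLM (Mᵀ ^ i) (M ^ i)‖ ≤ ‖Mᵀ ^ i‖ * ‖M ^ i‖ := conjCLM_norm_le _ _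
  _ = ‖M ^ i‖ * ‖M ^ i‖ := by rw [← Matrix.transpose_pow, Matrix.frobenius_norm_transpose]
  _ ≤ C * r ^ i := h i

lemma summable_sandwich (hM : Decay M) (X : Matrix (Fin n) (Fin n) ℝ) :
    Summable fun i => (Mᵀ) ^ i * X * M ^ i := by
  obtain ⟨C, r, hC, hr0, hr1, h⟩ := decay_sq hM
  apply Summable.of_norm_bounded
    (((summable_geometric_of_lt_one hr0 hr1).mul_left C).mul_right ‖X‖)
  intro i
  calc ‖Mᵀ ^ i * X * M ^ i‖ ≤ ‖Mᵀ ^ i * X‖ * ‖M ^ i‖ := norm_mul_le _ _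
  _ ≤ ‖Mᵀ ^ i‖ * ‖X‖ * ‖M ^ i‖ := by gcongr; exact norm_mul_le _ _
  _ = ‖M ^ i‖ * ‖M ^ i‖ * ‖X‖ := by
      rw [← Matrix.transpose_pow, Matrix.frobenius_norm_transpose]; ring
  _ ≤ C * r ^ i * ‖X‖ := mul_le_mul_of_nonneg_right (h i) (norm_nonneg X)

lemma summable_out (hM : Decay M) : Summable fun i => M ^ i * (Mᵀ) ^ i := by
  obtain ⟨C, r, hC, hr0, hr1, h⟩ := decay_sq hM
  apply Summable.of_norm_bounded ((summable_geometric_of_lt_one hr0 hr1).mul_left C)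
  intro i
  calc ‖M ^ i * Mᵀ ^ i‖ ≤ ‖M ^ i‖ * ‖Mᵀ ^ i‖ := norm_mul_le _ _
  _ = ‖M ^ i‖ * ‖M ^ i‖ := by rw [← Matrix.transpose_pow, Matrix.frobenius_norm_transpose]
  _ ≤ C * r ^ i := h i

lemma isUnit_one_sub_conj (hM : Decay M) : IsUnit ((1:_) - conjCLM Mᵀ M) :=
  (inverse_one_sub_of_summable (summable_conj_pow hM)).1

lemma inverse_conj_apply (hM : Decay M) (X : Matrix (Fin n) (Fin n) ℝ) :
    Ring.inverse (1 - conjCLM Mᵀ M) X = ∑' i, (Mᵀ) ^ i * X * M ^ i := by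
  rw [(inverse_one_sub_of_summable (summable_conj_pow hM)).2]
  have := (ContinuousLinearMap.apply ℝ (Matrix (Fin n) (Fin n) ℝ) X).map_tsum
    (summable_conj_pow hM)
  simp only [ContinuousLinearMap.apply_apply] at this
  rw [this]
  exact tsum_congr fun i => by rw [conjCLM_pow]; simp

lemma trace_tsum_eq (f : ℕ → Matrix (Fin n) (Fin n) ℝ) (hf : Summable f) :
    Matrix.trace (∑' i, f i) = ∑' i, Matrix.trace (f i) := by
  simpa using (Matrix.traceLinearMap (Fin n) ℝ ℝ).toContinuousLinearMap.map_tsum hf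

lemma mul_tsum_eq (G : Matrix (Fin n) (Fin n) ℝ) (f : ℕ → Matrix (Fin n) (Fin n) ℝ)
    (hf : Summable f) : G * (∑' i, f i) = ∑' i, G * f i := by
  simpa using (LinearMap.mulLeft ℝ G).toContinuousLinearMap.map_tsum hf

lemma transpose_tsum (f : ℕ → Matrix (Fin n) (Fin n) ℝ) (hf : Summable f) :
    (∑' i, f i)ᵀ = ∑' i, (f i)ᵀ := by
  simpa using
    ((Matrix.transposeLinearEquiv (Fin n) (Fin n) ℝ ℝ).toLinearMap.toContinuousLinearMap).map_tsum hf

lemma trace_inverse_conj_apply (hM : Decay M) (X : Matrix (Fin n) (Fin n) ℝ) :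
    Matrix.trace (Ring.inverse (1 - conjCLM Mᵀ M) X) =
      Matrix.trace (X * ∑' i, M ^ i * (Mᵀ) ^ i) := by
  rw [inverse_conj_apply hM, trace_tsum_eq _ (summable_sandwich hM X),
    mul_tsum_eq _ _ (summable_out hM), trace_tsum_eq _ ((summable_out hM).mul_left X)]
  refine tsum_congr fun i => ?_
  calc Matrix.trace (Mᵀ ^ i * X * M ^ i) = Matrix.trace (M ^ i * (Mᵀ ^ i * X)) :=
        Matrix.trace_mul_comm _ _
  _ = Matrix.trace (X * (M ^ i * Mᵀ ^ i)) := by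
      rw [← Matrix.mul_assoc]
      exact (Matrix.trace_mul_comm _ _).symm

lemma inverse_conj_transpose (hM : Decay M) (X : Matrix (Fin n) (Fin n) ℝ)
    (hX : Xᵀ = X) :
    (Ring.inverse (1 - conjCLM Mᵀ M) X)ᵀ = Ring.inverse (1 - conjCLM Mᵀ M) X := by
  rw [inverse_conj_apply hM, transpose_tsum _ (summable_sandwich hM X)]
  exact tsum_congr fun i => by
    simp [Matrix.transpose_mul, Matrix.transpose_pow, hX, Matrix.mul_assoc]

lemma tsum_out_transpose (hM : Decay M) :
    (∑' i, M ^ i * (Mᵀ) ^ i)ᵀ = ∑' i, M ^ i * (Mᵀ) ^ i := by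
  rw [transpose_tsum _ (summable_out hM)]
  exact tsum_congr fun i => by simp [Matrix.transpose_mul, Matrix.transpose_pow]

lemma transpose_eq_of_isHermitian {ι : Type*} [Fintype ι] {A : Matrix ι ι ℝ}
    (h : A.IsHermitian) : Aᵀ = A := by
  ext i j
  have h2 := congrFun (congrFun h i) j
  simp only [Matrix.conjTranspose_apply, star_trivial] at h2
  simpa [Matrix.transpose_apply] using h2

lemma trace_swap {k : ℕ} (U W X S : Matrix (Fin k) (Fin k) ℝ) (hX : Xᵀ = X) (hS : Sᵀ = S) :
    Matrix.trace (Uᵀ * X * W * S) = Matrix.trace (Wᵀ * X * U * S) := by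
  conv_lhs => rw [← Matrix.trace_transpose]
  have h2 : (Uᵀ * X * W * S)ᵀ = S * (Wᵀ * (X * U)) := by
    simp [Matrix.transpose_mul, Matrix.mul_assoc, hX, hS]
  rw [h2, Matrix.trace_mul_comm]
  simp [Matrix.mul_assoc]

end HessAux
end HessianAux

section HessianMain
open Filter Topology
namespace HessMain
attribute [local instance] Matrix.frobeniusSeminormedAddCommGroup
  Matrix.frobeniusNormedAddCommGroup Matrix.frobeniusNormedSpace
  Matrix.frobeniusNormedRing Matrix.frobeniusNormedAlgebra

open HessAux

attribute [local instance high] frobTop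

set_option maxHeartbeats 1000000 in
theorem hessian_main {n m t : ℕ} (hn : 0 < n) (hm : 0 < m) (ht : 0 < t)
    (U0 : Matrix (Fin m) (Fin t) ℝ) (X0 X1 : Matrix (Fin n) (Fin t) ℝ)
    (Q : Matrix (Fin n) (Fin n) ℝ) (R : Matrix (Fin m) (Fin m) ℝ)
    (hQ : Q.PosDef) (hR : R.PosDef)
    (hrank : (Dmat U0 X0).rank = m + n)
    (V : Matrix (Fin m ⊕ Fin n) (Fin n) ℝ) (hV : V ∈ feasSet U0 X0 X1)
    (Z : Matrix (Fin m ⊕ Fin n) (Fin n) ℝ)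
    (EV : Matrix (Fin m ⊕ Fin n) (Fin n) ℝ)
    (hEV : EV = ((Ubar U0 X0)ᵀ * R * Ubar U0 X0 +
        (Xbar1 U0 X0 X1)ᵀ * PV U0 X0 X1 Q R V * Xbar1 U0 X0 X1) * V)
    (P' : Matrix (Fin n) (Fin n) ℝ)
    (hP' : P' = ∑' i : ℕ, ((Xbar1 U0 X0 X1 * V)ᵀ) ^ i * (Zᵀ * EV + EVᵀ * Z) *
        (Xbar1 U0 X0 X1 * V) ^ i) :
    iteratedDeriv 2 (fun τ : ℝ => Jcost U0 X0 X1 Q R (V + τ • Z)) 0 =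
      4 * Matrix.trace (Zᵀ * (Xbar1 U0 X0 X1)ᵀ * P' * Xbar1 U0 X0 X1 * V * SigV U0 X0 X1 V) +
      2 * Matrix.trace (Zᵀ * ((Ubar U0 X0)ᵀ * R * Ubar U0 X0 +
          (Xbar1 U0 X0 X1)ᵀ * PV U0 X0 X1 Q R V * Xbar1 U0 X0 X1) * Z * SigV U0 X0 X1 V) := by
  classical
  -- notation
  set F1 : Matrix (Fin n) (Fin m ⊕ Fin n) ℝ := Xbar1 U0 X0 X1 with hF1
  set A : Matrix (Fin n) (Fin n) ℝ := F1 * V with hA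
  set Bz : Matrix (Fin n) (Fin n) ℝ := F1 * Z with hBz
  set Mu : Matrix (Fin m ⊕ Fin n) (Fin m ⊕ Fin n) ℝ :=
    (Ubar U0 X0)ᵀ * R * Ubar U0 X0 with hMu
  set G0 : Matrix (Fin n) (Fin n) ℝ := Q + Vᵀ * Mu * V with hG0
  set G1 : Matrix (Fin n) (Fin n) ℝ := Zᵀ * Mu * V + Vᵀ * Mu * Z with hG1
  set G2 : Matrix (Fin n) (Fin n) ℝ := Zᵀ * Mu * Z with hG2
  set T1 := conjCLM Bzᵀ A + conjCLM Aᵀ Bz with hT1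
  set T2 := conjCLM Bzᵀ Bz with hT2
  set d1 := -T1 with hd1
  set d2 := -T2 with hd2
  set Gpoly : ℝ → Matrix (Fin n) (Fin n) ℝ := fun τ => G0 + τ • G1 + τ^2 • G2 with hGpoly
  set Gd : ℝ → Matrix (Fin n) (Fin n) ℝ := fun τ => G1 + (2*τ) • G2 with hGd
  set φ : ℝ → (Matrix (Fin n) (Fin n) ℝ →L[ℝ] Matrix (Fin n) (Fin n) ℝ) :=
    fun τ => (1 - conjCLM Aᵀ A) + τ • d1 + τ^2 • d2 with hφ
  set g : ℝ → (Matrix (Fin n) (Fin n) ℝ →L[ℝ] Matrix (Fin n) (Fin n) ℝ) :=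
    fun τ => Ring.inverse (φ τ) with hg
  -- basic matrix polynomial identities
  have hMul : ∀ τ : ℝ, F1 * (V + τ • Z) = A + τ • Bz := by
    intro τ
    rw [Matrix.mul_add, Matrix.mul_smul]
  have hGmat : ∀ τ : ℝ,
      Q + (V + τ • Z)ᵀ * (Ubar U0 X0)ᵀ * R * Ubar U0 X0 * (V + τ • Z) = Gpoly τ := by
    intro τ
    have : (V + τ • Z)ᵀ = Vᵀ + τ • Zᵀ := by
      rw [Matrix.transpose_add, Matrix.transpose_smul]
    rw [this]
    simp only [hGpoly, hG0, hG1, hG2, hMu, Matrix.add_mul, Matrix.mul_add,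
      Matrix.smul_mul, Matrix.mul_smul, smul_smul, smul_add, pow_two, Matrix.mul_assoc]
    abel
  have hφeq : ∀ τ : ℝ, φ τ = 1 - conjCLM (A + τ • Bz)ᵀ (A + τ • Bz) := by
    intro τ
    refine ContinuousLinearMap.ext fun X => ?_
    have hT : (A + τ • Bz)ᵀ = Aᵀ + τ • Bzᵀ := by
      rw [Matrix.transpose_add, Matrix.transpose_smul]
    simp only [hφ, hd1, hd2, hT1, hT2, hT, ContinuousLinearMap.add_apply,
      ContinuousLinearMap.smul_apply, ContinuousLinearMap.sub_apply,
      ContinuousLinearMap.one_apply, ContinuousLinearMap.neg_apply, conjCLM_apply,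
      Matrix.add_mul, Matrix.mul_add, Matrix.smul_mul, Matrix.mul_smul, smul_smul,
      smul_add, pow_two]
    module
  -- decay facts
  have hdec0 : Decay A := decay_of_specLt1 hV.2
  have hev_dec : ∀ᶠ τ : ℝ in 𝓝 0, Decay (A + τ • Bz) := decay_nhds hdec0
  have hUev : ∀ᶠ τ : ℝ in 𝓝 0, IsUnit (φ τ) :=
    hev_dec.mono fun τ h => by rw [hφeq τ]; exact isUnit_one_sub_conj h
  -- the smooth surrogate
  set Jt : ℝ → ℝ := fun τ => Matrix.trace (g τ (Gpoly τ)) with hJt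
  -- eventual equality with the cost
  have heq : (fun τ : ℝ => Jcost U0 X0 X1 Q R (V + τ • Z)) =ᶠ[𝓝 0] Jt := by
    refine hev_dec.mono fun τ hdec => ?_
    show Jcost U0 X0 X1 Q R (V + τ • Z) = Jt τ
    have h1 : Jcost U0 X0 X1 Q R (V + τ • Z) =
        Matrix.trace (Gpoly τ * ∑' i : ℕ, (A + τ • Bz) ^ i * ((A + τ • Bz)ᵀ) ^ i) := by
      unfold Jcost SigV lyap
      rw [← hF1, hMul τ, hGmat τ]
      rfl
    have h2 : Jt τ = Matrix.trace
        (Gpoly τ * ∑' i : ℕ, (A + τ • Bz) ^ i * ((A + τ • Bz)ᵀ) ^ i) := by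
      rw [hJt]
      show Matrix.trace (g τ (Gpoly τ)) = _
      rw [hg]
      show Matrix.trace (Ring.inverse (φ τ) (Gpoly τ)) = _
      rw [hφeq τ, trace_inverse_conj_apply hdec]
    rw [h1, h2]
  -- derivatives
  have hφd : ∀ τ : ℝ, HasDerivAt φ (d1 + (2*τ) • d2) τ := by
    intro τ
    have h1 : HasDerivAt (fun σ : ℝ => σ • d1) d1 τ := by
      simpa using (hasDerivAt_id τ).smul_const d1
    have h2 : HasDerivAt (fun σ : ℝ => σ^2 • d2) ((2*τ) • d2) τ := by
      simpa using (hasDerivAt_pow 2 τ).smul_const d2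
    have h := ((hasDerivAt_const τ ((1:_) - conjCLM Aᵀ A)).add h1).add h2
    simp at h
    exact h
  have hgd : ∀ τ : ℝ, IsUnit (φ τ) →
      HasDerivAt g (-(g τ * (d1 + (2*τ) • d2) * g τ)) τ := by
    intro τ hτ
    have hgτ : g τ = ↑hτ.unit⁻¹ := by
      show Ring.inverse (φ τ) = _
      conv_lhs => rw [← hτ.unit_spec]
      exact Ring.inverse_unit hτ.unit
    have hinv := hasFDerivAt_ringInverse (𝕜 := ℝ) hτ.unit
    rw [hτ.unit_spec] at hinv
    have hcomp := hinv.comp_hasDerivAt τ (hφd τ)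
    have : HasDerivAt g (-(↑hτ.unit⁻¹ * (d1 + (2*τ) • d2) * ↑hτ.unit⁻¹)) τ := by
      have h := hcomp
      simp [ContinuousLinearMap.neg_apply, ContinuousLinearMap.mulLeftRight_apply] at h
      exact h
    rw [← hgτ] at this
    exact this
  have hGpAt : ∀ τ : ℝ, HasDerivAt Gpoly (Gd τ) τ := by
    intro τ
    have h1 : HasDerivAt (fun σ : ℝ => σ • G1) G1 τ := by
      simpa using (hasDerivAt_id τ).smul_const G1
    have h2 : HasDerivAt (fun σ : ℝ => σ^2 • G2) ((2*τ) • G2) τ := by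
      simpa using (hasDerivAt_pow 2 τ).smul_const G2
    have h := ((hasDerivAt_const τ G0).add h1).add h2
    simp at h
    exact h
  set D1 : ℝ → ℝ := fun τ =>
    Matrix.trace ((-(g τ * (d1 + (2*τ) • d2) * g τ)) (Gpoly τ) + (g τ) (Gd τ)) with hD1def
  have hJd : ∀ τ : ℝ, IsUnit (φ τ) → HasDerivAt Jt (D1 τ) τ := by
    intro τ hτ
    have hF := (hgd τ hτ).clm_apply (hGpAt τ)
    exact ((Matrix.traceLinearMap (Fin n) ℝ ℝ).toContinuousLinearMap
      ).hasFDerivAt.comp_hasDerivAt τ hF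
  have hderiv_ev : deriv Jt =ᶠ[𝓝 0] D1 := hUev.mono fun τ hτ => (hJd τ hτ).deriv
  -- pass to iterated derivative
  have hiter : iteratedDeriv 2 (fun τ : ℝ => Jcost U0 X0 X1 Q R (V + τ • Z)) 0 =
      deriv D1 0 := by
    rw [iteratedDeriv_succ, iteratedDeriv_one]
    have h1 : deriv (fun τ : ℝ => Jcost U0 X0 X1 Q R (V + τ • Z)) =ᶠ[𝓝 0] deriv Jt :=
      heq.deriv
    exact (h1.trans hderiv_ev).deriv_eq
  -- second derivative of the surrogate at 0
  have hu0 : IsUnit (φ 0) := hUev.self_of_nhds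
  have hg0 : HasDerivAt g (-(g 0 * d1 * g 0)) 0 := by
    have := hgd 0 hu0
    simpa using this
  have hφd0c : HasDerivAt (fun τ : ℝ => d1 + (2*τ) • d2) ((2:ℝ) • d2) 0 := by
    have h2 : HasDerivAt (fun τ : ℝ => (2*τ) • d2) ((2:ℝ) • d2) 0 := by
      simpa using ((hasDerivAt_id (0:ℝ)).const_mul 2).smul_const d2
    exact h2.const_add d1
  have hGd0 : HasDerivAt Gd ((2:ℝ) • G2) 0 := by
    have h2 : HasDerivAt (fun τ : ℝ => (2*τ) • G2) ((2:ℝ) • G2) 0 := by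
      simpa using ((hasDerivAt_id (0:ℝ)).const_mul 2).smul_const G2
    exact h2.const_add G1
  have hcder := ((hg0.mul hφd0c).mul hg0).neg
  have hD1d0 := ((Matrix.traceLinearMap (Fin n) ℝ ℝ).toContinuousLinearMap
    ).hasFDerivAt.comp_hasDerivAt 0 ((hcder.clm_apply (hGpAt 0)).add (hg0.clm_apply hGd0))
  have hD1d : HasDerivAt D1 _ 0 := hD1d0
  rw [hiter, hD1d.deriv]
  -- simple evaluations
  have hGp00 : Gpoly 0 = G0 := by simp [hGpoly]
  have hGd00 : Gd 0 = G1 := by simp [hGd]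
  have hφ0 : φ 0 = 1 - conjCLM Aᵀ A := by simp [hφ]
  have happ : ∀ X : Matrix (Fin n) (Fin n) ℝ,
      g 0 X = ∑' i : ℕ, (Aᵀ) ^ i * X * A ^ i := by
    intro X
    show Ring.inverse (φ 0) X = _
    rw [hφ0]
    exact inverse_conj_apply hdec0 X
  have htrX : ∀ X : Matrix (Fin n) (Fin n) ℝ,
      Matrix.trace (g 0 X) = Matrix.trace (X * ∑' i : ℕ, A ^ i * (Aᵀ) ^ i) := by
    intro X
    show Matrix.trace (Ring.inverse (φ 0) X) = _
    rw [hφ0]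
    exact trace_inverse_conj_apply hdec0 X
  have hsymm : ∀ X : Matrix (Fin n) (Fin n) ℝ, Xᵀ = X → (g 0 X)ᵀ = g 0 X := by
    intro X hX
    show (Ring.inverse (φ 0) X)ᵀ = Ring.inverse (φ 0) X
    rw [hφ0]
    exact inverse_conj_transpose hdec0 X hX
  set Sg : Matrix (Fin n) (Fin n) ℝ := ∑' i : ℕ, A ^ i * (Aᵀ) ^ i with hSgdef
  have hS : SigV U0 X0 X1 V = Sg := rfl
  set Pm : Matrix (Fin n) (Fin n) ℝ := PV U0 X0 X1 Q R V with hPmdef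
  have hPfold : g 0 G0 = Pm := by
    rw [happ, hPmdef]
    show _ = ∑' i : ℕ, ((Xbar1 U0 X0 X1 * V)ᵀ) ^ i *
      (Q + Vᵀ * (Ubar U0 X0)ᵀ * R * Ubar U0 X0 * V) * (Xbar1 U0 X0 X1 * V) ^ i
    rw [← hF1]
    refine tsum_congr fun i => ?_
    rw [hG0, hMu]
    simp [Matrix.mul_assoc, hA]
  -- symmetry facts
  have hQT : Qᵀ = Q := transpose_eq_of_isHermitian hQ.1
  have hRT : Rᵀ = R := transpose_eq_of_isHermitian hR.1
  have hMuT : Muᵀ = Mu := by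
    rw [hMu]
    simp [Matrix.transpose_mul, hRT, Matrix.mul_assoc]
  have hG0T : G0ᵀ = G0 := by
    rw [hG0]
    simp [Matrix.transpose_add, Matrix.transpose_mul, hQT, hMuT, Matrix.mul_assoc]
  have hPT : Pmᵀ = Pm := by rw [← hPfold]; exact hsymm G0 hG0T
  have hST : Sgᵀ = Sg := tsum_out_transpose hdec0
  -- P' facts
  have hP'eq : P' = g 0 (Zᵀ * EV + EVᵀ * Z) := by rw [hP', happ]
  have hP'T : P'ᵀ = P' := by
    rw [hP'eq]
    apply hsymm
    rw [Matrix.transpose_add, Matrix.transpose_mul, Matrix.transpose_mul,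
      Matrix.transpose_transpose, Matrix.transpose_transpose, add_comm]
  have hYE : Zᵀ * EV + EVᵀ * Z = T1 Pm + G1 := by
    have hEVT : EVᵀ = Vᵀ * (Mu + F1ᵀ * Pm * F1) := by
      rw [hEV]
      rw [Matrix.transpose_mul]
      congr 1
      rw [Matrix.transpose_add]
      rw [hMuT]
      congr 1
      simp [Matrix.transpose_mul, hPT, Matrix.mul_assoc]
    rw [hEVT, hEV]
    simp only [hT1, ContinuousLinearMap.add_apply, conjCLM_apply, hG1, hBz, hA,
      Matrix.transpose_mul, Matrix.mul_add, Matrix.add_mul, Matrix.mul_assoc]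
    abel
  have hP'split : P' = g 0 (T1 Pm) + g 0 G1 := by rw [hP'eq, hYE, map_add]
  -- the three key trace identities
  have key1 : Matrix.trace (g 0 (T1 P')) = 2 * Matrix.trace (Zᵀ * F1ᵀ * P' * F1 * V * Sg) := by
    rw [htrX]
    have hsw : Matrix.trace (Aᵀ * P' * Bz * Sg) = Matrix.trace (Bzᵀ * P' * A * Sg) :=
      trace_swap A Bz P' Sg hP'T hST
    have hBP : Matrix.trace (Bzᵀ * P' * A * Sg) =
        Matrix.trace (Zᵀ * F1ᵀ * P' * F1 * V * Sg) := by
      rw [hBz, hA]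
      simp [Matrix.transpose_mul, Matrix.mul_assoc]
    simp only [hT1, ContinuousLinearMap.add_apply, Matrix.add_mul, conjCLM_apply,
      Matrix.trace_add]
    rw [hsw, hBP]
    ring
  have key2 : Matrix.trace (g 0 (T2 Pm)) + Matrix.trace (g 0 G2) =
      Matrix.trace (Zᵀ * (Mu + F1ᵀ * Pm * F1) * Z * Sg) := by
    rw [htrX, htrX]
    rw [← Matrix.trace_add, ← Matrix.add_mul]
    congr 1
    simp only [hT2, conjCLM_apply, hG2, hBz, Matrix.mul_add, Matrix.add_mul,
      Matrix.transpose_mul, Matrix.mul_assoc]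
    abel
  have hsplit_tr : Matrix.trace (g 0 (T1 P')) =
      Matrix.trace (g 0 (T1 (g 0 (T1 Pm)))) + Matrix.trace (g 0 (T1 (g 0 G1))) := by
    rw [hP'split, map_add, map_add, Matrix.trace_add]
  -- expand the combinator value
  have htl : ∀ X : Matrix (Fin n) (Fin n) ℝ,
      (Matrix.traceLinearMap (Fin n) ℝ ℝ).toContinuousLinearMap X = Matrix.trace X :=
    fun X => rfl
  rw [hS]
  simp only [htl, hGp00, hGd00, mul_zero, zero_smul, add_zero, hd1, hd2,
    ContinuousLinearMap.add_apply, ContinuousLinearMap.mul_apply,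
    ContinuousLinearMap.neg_apply, ContinuousLinearMap.smul_apply,
    map_add, map_neg, _root_.map_smul, neg_neg, hPfold, Pi.mul_apply, Pi.neg_apply,
    Matrix.trace_add, Matrix.trace_neg, Matrix.trace_smul, smul_eq_mul]
  rw [hsplit_tr] at key1
  linarith [key1, key2]

end HessMain
end HessianMain

/-- Hessian formula for `J` (Lemma 12). -/
theorem stmt_10 {n m t : ℕ} (hn : 0 < n) (hm : 0 < m) (ht : 0 < t)
    (U0 : Matrix (Fin m) (Fin t) ℝ) (X0 X1 : Matrix (Fin n) (Fin t) ℝ)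
    (Q : Matrix (Fin n) (Fin n) ℝ) (R : Matrix (Fin m) (Fin m) ℝ)
    (hQ : Q.PosDef) (hR : R.PosDef)
    (hrank : (Dmat U0 X0).rank = m + n)
    (V : Matrix (Fin m ⊕ Fin n) (Fin n) ℝ) (hV : V ∈ feasSet U0 X0 X1)
    (Z : Matrix (Fin m ⊕ Fin n) (Fin n) ℝ)
    (EV : Matrix (Fin m ⊕ Fin n) (Fin n) ℝ)
    (hEV : EV = ((Ubar U0 X0)ᵀ * R * Ubar U0 X0 +
        (Xbar1 U0 X0 X1)ᵀ * PV U0 X0 X1 Q R V * Xbar1 U0 X0 X1) * V)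
    (P' : Matrix (Fin n) (Fin n) ℝ)
    (hP' : P' = ∑' i : ℕ, ((Xbar1 U0 X0 X1 * V)ᵀ) ^ i * (Zᵀ * EV + EVᵀ * Z) *
        (Xbar1 U0 X0 X1 * V) ^ i) :
    iteratedDeriv 2 (fun τ : ℝ => Jcost U0 X0 X1 Q R (V + τ • Z)) 0 =
      4 * Matrix.trace (Zᵀ * (Xbar1 U0 X0 X1)ᵀ * P' * Xbar1 U0 X0 X1 * V * SigV U0 X0 X1 V) +
      2 * Matrix.trace (Zᵀ * ((Ubar U0 X0)ᵀ * R * Ubar U0 X0 +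
          (Xbar1 U0 X0 X1)ᵀ * PV U0 X0 X1 Q R V * Xbar1 U0 X0 X1) * Z * SigV U0 X0 X1 V) :=
  HessMain.hessian_main hn hm ht U0 X0 X1 Q R hQ hR hrank V hV Z EV hEV P' hP'
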